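/- Let Λ be a locally finite preordered set, P a commutative ring, and Λ' ⊆ Λ a convex subset. The map sending A ∈ GL_Λ(P) to its restriction (A_{s,t})_{s,t ∈ Λ'} is a surjective group homomorphism GL_Λ(P) → GL_{Λ'}(P), with kernel N^Λ_{Λ'} = {A : A_{s,s} = 1 for s ∈ Λ' and A_{s,t} = 0 for s ≠ t in Λ'}; hence GL_Λ(P)/N^Λ_{Λ'} ≅ GL_{Λ'}(P). -/

import Mathlib

open Finset

section Aux

variable {Λ P : Type*} [Preorder Λ] [LocallyFiniteOrder Λ] [DecidableEq Λ]
    [CommRing P] (Λ' : Set Λ) [DecidablePred (· ∈ Λ')]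

/-- Restriction of an incidence-algebra element to a subset. -/
def IARestrict (f : IncidenceAlgebra P Λ) : IncidenceAlgebra P ↥Λ' :=
  ⟨fun a b => f a b, fun a b h => f.apply_eq_zero_of_not_le (by exact_mod_cast h)⟩

@[simp] lemma IARestrict_apply (f : IncidenceAlgebra P Λ) (a b : ↥Λ') :
    IARestrict Λ' f a b = f a b := rfl

variable (P) in
/-- Extension of an incidence-algebra element by the identity. -/
def IAExtend (g : IncidenceAlgebra P ↥Λ') : IncidenceAlgebra P Λ where
  toFun s t := if h : s ∈ Λ' ∧ t ∈ Λ' then g ⟨s, h.1⟩ ⟨t, h.2⟩ else if s = t then 1 else 0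
  eq_zero_of_not_le' s t h := by
    split
    · exact g.apply_eq_zero_of_not_le (by exact_mod_cast h)
    · exact if_neg fun H => h (le_of_eq H)

lemma IAExtend_apply (g : IncidenceAlgebra P ↥Λ') (s t : Λ) :
    IAExtend P Λ' g s t =
      if h : s ∈ Λ' ∧ t ∈ Λ' then g ⟨s, h.1⟩ ⟨t, h.2⟩ else if s = t then 1 else 0 := rfl

@[simp] lemma IAExtend_apply_mem (g : IncidenceAlgebra P ↥Λ') (s t : ↥Λ') :
    IAExtend P Λ' g s t = g s t := by
  simp [IAExtend_apply, s.2, t.2]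

lemma IARestrict_extend (g : IncidenceAlgebra P ↥Λ') :
    IARestrict Λ' (IAExtend P Λ' g) = g := by
  ext a b _
  simp

lemma IAExtend_one : IAExtend P Λ' 1 = 1 := by
  ext s t _
  rw [IAExtend_apply]
  split
  · simp [Subtype.ext_iff]
  · rfl

variable (hint : ∀ ⦃s t : Λ⦄, s ∈ Λ' → t ∈ Λ' → s ≤ t → Set.Icc s t ⊆ Λ')

include hint in
lemma map_emb_Icc (a b : ↥Λ') :
    (Finset.Icc a b).map (Function.Embedding.subtype _) = Finset.Icc (a : Λ) (b : Λ) := by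
  ext x
  simp only [Finset.mem_map, Function.Embedding.coe_subtype, Finset.mem_Icc]
  constructor
  · rintro ⟨y, hy, rfl⟩
    exact ⟨hy.1, hy.2⟩
  · rintro ⟨h1, h2⟩
    exact ⟨⟨x, hint a.2 b.2 (h1.trans h2) ⟨h1, h2⟩⟩, ⟨h1, h2⟩, rfl⟩

include hint in
lemma IARestrict_mul (f g : IncidenceAlgebra P Λ) :
    IARestrict Λ' (f * g) = IARestrict Λ' f * IARestrict Λ' g := by
  ext a b _
  rw [IARestrict_apply, IncidenceAlgebra.mul_apply, IncidenceAlgebra.mul_apply,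
    ← map_emb_Icc Λ' hint a b, Finset.sum_map]
  rfl

include hint in
lemma IAExtend_mul (g h : IncidenceAlgebra P ↥Λ') :
    IAExtend P Λ' g * IAExtend P Λ' h = IAExtend P Λ' (g * h) := by
  ext s t hst
  rw [IncidenceAlgebra.mul_apply, IAExtend_apply]
  by_cases hs : s ∈ Λ' <;> by_cases ht : t ∈ Λ'
  · rw [dif_pos ⟨hs, ht⟩, IncidenceAlgebra.mul_apply,
      ← map_emb_Icc Λ' hint ⟨s, hs⟩ ⟨t, ht⟩, Finset.sum_map]
    refine Finset.sum_congr rfl fun x hx => ?_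
    simp [IAExtend_apply, hs, ht, x.2]
  · rw [dif_neg (by simp [ht]), if_neg (by rintro rfl; exact ht hs)]
    refine Finset.sum_eq_zero fun x hx => ?_
    rw [Finset.mem_Icc] at hx
    rcases eq_or_ne x t with rfl | hxt
    · rw [IAExtend_apply Λ' g, dif_neg (by simp [ht]), if_neg (by rintro rfl; exact ht hs),
        zero_mul]
    · rw [IAExtend_apply Λ' h, dif_neg (by simp [ht]), if_neg hxt, mul_zero]
  · rw [dif_neg (by simp [hs]), if_neg (by rintro rfl; exact hs ht)]
    refine Finset.sum_eq_zero fun x hx => ?_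
    rcases eq_or_ne s x with rfl | hsx
    · rw [IAExtend_apply Λ' h, dif_neg (by simp [hs]), if_neg (by rintro rfl; exact hs ht),
        mul_zero]
    · rw [IAExtend_apply Λ' g, dif_neg (by simp [hs]), if_neg hsx, zero_mul]
  · refine Finset.sum_eq_single s (fun x hx hxs => ?_) (by simp [hst]) |>.trans ?_
    · rw [IAExtend_apply Λ' g, dif_neg (by simp [hs]), if_neg (Ne.symm hxs), zero_mul]
    · rw [IAExtend_apply Λ' g, dif_neg (by simp [hs]), if_pos rfl,
        IAExtend_apply Λ' h, dif_neg (by simp [hs]), one_mul,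
        dif_neg fun H => hs H.1]

end Aux

/-- Let `Λ` be a locally finite preordered set, `P` a commutative ring and `Λ' ⊆ Λ` a
convex subset (closed under intervals and connected by chains of comparabilities
within `Λ'`).  Restriction of matrices to coordinates in `Λ'` is a surjective group
homomorphism `GL_Λ(P) → GL_{Λ'}(P)` whose kernel is the congruence subgroup
`N^Λ_{Λ'}`; hence `GL_Λ(P)/N^Λ_{Λ'} ≅ GL_{Λ'}(P)`. -/
theorem stmt12 {Λ P : Type*} [Preorder Λ] [LocallyFiniteOrder Λ] [DecidableEq Λ]
    [CommRing P] (Λ' : Set Λ) [DecidablePred (· ∈ Λ')]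
    (hint : ∀ ⦃s t : Λ⦄, s ∈ Λ' → t ∈ Λ' → s ≤ t → Set.Icc s t ⊆ Λ')
    (hconn : ∀ s t : ↥Λ',
      Relation.ReflTransGen (fun a b : ↥Λ' => a ≤ b ∨ b ≤ a) s t) :
    ∃ φ : (IncidenceAlgebra P Λ)ˣ →* (IncidenceAlgebra P ↥Λ')ˣ,
      (∀ (A : (IncidenceAlgebra P Λ)ˣ) (s t : ↥Λ'),
          ((φ A : IncidenceAlgebra P ↥Λ') s t =
            (A : IncidenceAlgebra P Λ) (s : Λ) (t : Λ))) ∧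
      Function.Surjective φ ∧
      (∀ A : (IncidenceAlgebra P Λ)ˣ,
        A ∈ φ.ker ↔
          ((∀ s ∈ Λ', (A : IncidenceAlgebra P Λ) s s = 1) ∧
            ∀ s ∈ Λ', ∀ t ∈ Λ', s ≠ t → (A : IncidenceAlgebra P Λ) s t = 0)) := by
  have res_one : IARestrict Λ' (1 : IncidenceAlgebra P Λ) = 1 := by
    ext a b _
    simp [Subtype.ext_iff]
  refine ⟨{ toFun := fun A =>
              ⟨IARestrict Λ' A.val, IARestrict Λ' A.inv,
                by rw [← IARestrict_mul Λ' hint, A.val_inv, res_one],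
                by rw [← IARestrict_mul Λ' hint, A.inv_val, res_one]⟩,
            map_one' := Units.ext res_one,
            map_mul' := fun A B => Units.ext (IARestrict_mul Λ' hint A.val B.val) },
    fun A s t => rfl, ?_, ?_⟩
  · intro B
    refine ⟨⟨IAExtend P Λ' B.val, IAExtend P Λ' B.inv,
      by rw [IAExtend_mul Λ' hint, B.val_inv, IAExtend_one],
      by rw [IAExtend_mul Λ' hint, B.inv_val, IAExtend_one]⟩, Units.ext ?_⟩
    exact IARestrict_extend Λ' B.val
  · intro A
    constructor
    · intro hA
      have h : IARestrict Λ' A.val = 1 := congrArg Units.val hA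
      constructor
      · intro s hs
        have := congrFun (congrFun (congrArg DFunLike.coe h) ⟨s, hs⟩) ⟨s, hs⟩
        simpa using this
      · intro s hs t ht hst
        have := congrFun (congrFun (congrArg DFunLike.coe h) ⟨s, hs⟩) ⟨t, ht⟩
        simpa [Subtype.ext_iff, hst] using this
    · rintro ⟨h1, h2⟩
      refine Units.ext ?_
      show IARestrict Λ' A.val = 1
      ext a b _
      rcases eq_or_ne a b with rfl | hab
      · simp [h1 a a.2]
      · have : (a : Λ) ≠ (b : Λ) := fun H => hab (Subtype.ext H)
        simp [hab, h2 a a.2 b b.2 this]
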